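/- Let f : F_{p^n} → F_p, c, d ∈ F_{p^n}, and λ ∈ F_p*. If the second-order derivative D_{c,d} f(x) equals λ for all x, then for every b ∈ F_{p^n} with Tr_n(bd) ≠ λ one has W_{D_c f}(b) = 0. -/

import Mathlib

open Finset
open scoped Classical

noncomputable instance (p n : ℕ) [Fact p.Prime] : Fintype (GaloisField p n) :=
  Fintype.ofFinite _

noncomputable def omg (p : ℕ) : ℂ := Complex.exp (2 * Real.pi * Complex.I / p)

noncomputable def ee (p : ℕ) (c : ZMod p) : ℂ := omg p ^ c.val

noncomputable def Tr (p n : ℕ) [Fact p.Prime] (x : GaloisField p n) : ZMod p :=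
  Algebra.trace (ZMod p) (GaloisField p n) x

noncomputable def W (p n : ℕ) [Fact p.Prime] (f : GaloisField p n → ZMod p)
    (y : GaloisField p n) : ℂ :=
  ∑ x : GaloisField p n, ee p (f x - Tr p n (x * y))

noncomputable def D (p n : ℕ) [Fact p.Prime] (a : GaloisField p n) (f : GaloisField p n → ZMod p)
    (x : GaloisField p n) : ZMod p :=
  f (x + a) - f x

noncomputable def D2 (p n : ℕ) [Fact p.Prime] (a b : GaloisField p n) (f : GaloisField p n → ZMod p)
    (x : GaloisField p n) : ZMod p :=
  f (x + a + b) - f (x + a) - f (x + b) + f x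

def IsBalanced (p n : ℕ) [Fact p.Prime] (f : GaloisField p n → ZMod p) : Prop :=
  ∀ c : ZMod p, (Finset.univ.filter (fun x => f x = c)).card = p ^ (n - 1)

def Bent (p n : ℕ) [Fact p.Prime] (f : GaloisField p n → ZMod p) : Prop :=
  ∀ y : GaloisField p n, ‖W p n f y‖ ^ 2 = (p : ℝ) ^ n

def IsQuadratic (p n : ℕ) [Fact p.Prime] (f : GaloisField p n → ZMod p) : Prop :=
  ∀ a b : GaloisField p n, ∃ c : ZMod p, ∀ x, D2 p n a b f x = c

def IsCubic (p n : ℕ) [Fact p.Prime] (f : GaloisField p n → ZMod p) : Prop :=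
  ∀ a b c : GaloisField p n, ∃ l : ZMod p, ∀ x, D2 p n b c f (x + a) - D2 p n b c f x = l

lemma ee_add (p : ℕ) [Fact p.Prime] (a b : ZMod p) : ee p (a + b) = ee p a * ee p b := by
  haveI : NeZero p := ⟨(Fact.out : p.Prime).ne_zero⟩
  have hprim := Complex.isPrimitiveRoot_exp p (Fact.out : p.Prime).ne_zero
  have hom : omg p ^ p = 1 := hprim.pow_eq_one
  unfold ee
  rw [ZMod.val_add, ← pow_add]
  conv_rhs => rw [← Nat.mod_add_div (a.val + b.val) p]
  rw [pow_add, pow_mul, hom, one_pow, mul_one]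

lemma ee_ne_one (p : ℕ) [Fact p.Prime] (a : ZMod p) (ha : a ≠ 0) : ee p a ≠ 1 := by
  haveI : NeZero p := ⟨(Fact.out : p.Prime).ne_zero⟩
  have hprim := Complex.isPrimitiveRoot_exp p (Fact.out : p.Prime).ne_zero
  have hv : a.val ≠ 0 := fun hv => ha ((ZMod.val_eq_zero a).mp hv)
  exact hprim.pow_ne_one_of_pos_of_lt hv (ZMod.val_lt a)

theorem stmt_14 (p n : ℕ) [Fact p.Prime] (f : GaloisField p n → ZMod p)
    (c d : GaloisField p n) (l : ZMod p) (hl : l ≠ 0)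
    (h : ∀ x, D2 p n c d f x = l) :
    ∀ b : GaloisField p n, Tr p n (b * d) ≠ l → W p n (D p n c f) b = 0 := by
  intro b hb
  set g := D p n c f with hg
  have key : ee p (l - Tr p n (b * d)) * W p n g b = W p n g b := by
    unfold W
    rw [Finset.mul_sum]
    refine Fintype.sum_equiv (Equiv.addRight d) _ _ (fun x => ?_)
    have h2 : g (x + d) = g x + l := by
      have hx := h x
      simp only [hg, D, D2] at *
      have hc : x + d + c = x + c + d := by ring
      rw [hc]
      linear_combination hx
    have h3 : Tr p n ((x + d) * b) = Tr p n (x * b) + Tr p n (b * d) := by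
      have : (x + d) * b = x * b + b * d := by ring
      rw [this]
      unfold Tr
      exact map_add _ _ _
    have h4 : g (x + d) - Tr p n ((x + d) * b)
        = (l - Tr p n (b * d)) + (g x - Tr p n (x * b)) := by
      rw [h2, h3]; ring
    show ee p (l - Tr p n (b * d)) * ee p (g x - Tr p n (x * b)) = _
    simp only [Equiv.coe_addRight]
    rw [h4, ee_add]
  have hz : (ee p (l - Tr p n (b * d)) - 1) * W p n g b = 0 := by
    rw [sub_mul, one_mul, key, sub_self]
  have hne : ee p (l - Tr p n (b * d)) - 1 ≠ 0 := by
    intro hcon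
    exact ee_ne_one p _ (sub_ne_zero.mpr (Ne.symm hb)) (by linear_combination hcon)
  exact (mul_eq_zero.mp hz).resolve_left hne
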